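/- arXiv:2511.11102 — 3 statements merged into one kernel-verified Lean document; each statement's English description precedes it below -/
import Mathlib

section
/- Two distinct symmetric 2×2 real matrices A and B are compatible (i.e. A − B = a ⊙ b for some nonzero a, b ∈ ℝ²) if and only if det(A − B) ≤ 0. -/
open Matrix BigOperators

/-- The symmetrized outer product `a ⊙ b := (1/2)(a ⊗ b + b ⊗ a)`. -/
noncomputable def odot {d : ℕ} (a b : Fin d → ℝ) : Matrix (Fin d) (Fin d) ℝ :=
  fun i j => (a i * b j + b i * a j) / 2

/-- Two distinct symmetric `2×2` real matrices `A` and `B` are compatible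
(`A − B = a ⊙ b` for nonzero `a, b`) iff `det(A − B) ≤ 0`. -/
theorem compatible_iff_det_nonpos (A B : Matrix (Fin 2) (Fin 2) ℝ)
    (hA : A.IsSymm) (hB : B.IsSymm) (hAB : A ≠ B) :
    (∃ a b : Fin 2 → ℝ, a ≠ 0 ∧ b ≠ 0 ∧ A - B = odot a b) ↔ (A - B).det ≤ 0 := by
  have hMsymm : (A - B) 1 0 = (A - B) 0 1 := by
    simp only [Matrix.sub_apply, hA.apply 0 1, hB.apply 0 1]
  set p := (A - B) 0 0 with hp0
  set q := (A - B) 0 1 with hq0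
  set r := (A - B) 1 1 with hr0
  have hdet : (A - B).det = p * r - q * q := by
    rw [Matrix.det_fin_two, hMsymm]
  constructor
  · rintro ⟨a, b, ha, hb, hab⟩
    rw [hdet]
    have h00 : p = (a 0 * b 0 + b 0 * a 0) / 2 := by rw [hp0, hab]; rfl
    have h01 : q = (a 0 * b 1 + b 0 * a 1) / 2 := by rw [hq0, hab]; rfl
    have h11 : r = (a 1 * b 1 + b 1 * a 1) / 2 := by rw [hr0, hab]; rfl
    rw [h00, h01, h11]
    nlinarith [sq_nonneg (a 0 * b 1 - a 1 * b 0)]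
  · intro hle
    rw [hdet] at hle
    have hM0 : A - B ≠ 0 := sub_ne_zero.mpr hAB
    by_cases hp : p = 0
    · refine ⟨![0, 1], ![2 * q, r], ?_, ?_, ?_⟩
      · intro h
        have := congrFun h 1
        simp at this
      · intro h
        have hq : q = 0 := by
          have := congrFun h 0
          simp at this
          linarith
        have hr : r = 0 := by
          have := congrFun h 1
          simpa using this
        apply hM0
        ext i j
        fin_cases i <;> fin_cases j <;>
          simp only [Fin.mk_zero, Fin.mk_one, Fin.isValue, Matrix.zero_apply]
        · rw [← hp0, hp]
        · rw [← hq0, hq]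
        · rw [hMsymm, hq]
        · rw [← hr0, hr]
      · ext i j
        fin_cases i <;> fin_cases j <;>
          simp only [odot, Fin.mk_zero, Fin.mk_one, Fin.isValue, Matrix.cons_val_zero, Matrix.cons_val_one, Matrix.head_cons]
        · rw [← hp0, hp]; ring
        · rw [← hq0]; ring
        · rw [hMsymm]; ring
        · rw [← hr0]; ring
    · set s := Real.sqrt (q * q - p * r) with hs0
      have hsq : s * s = q * q - p * r := by
        rw [hs0]; exact Real.mul_self_sqrt (by linarith)
      refine ⟨![1, (q + s) / p], ![p, 2 * q - (q + s) / p * p], ?_, ?_, ?_⟩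
      · intro h
        have := congrFun h 0
        simp at this
      · intro h
        have := congrFun h 0
        simp at this
        exact hp this
      · ext i j
        fin_cases i <;> fin_cases j <;>
          simp only [odot, Fin.mk_zero, Fin.mk_one, Fin.isValue, Matrix.cons_val_zero, Matrix.cons_val_one, Matrix.head_cons]
        · rw [← hp0]; ring
        · rw [← hq0]; field_simp; ring
        · rw [hMsymm]; field_simp; ring
        · rw [← hr0]; field_simp
          nlinarith [hsq]
end

section
/- Let p ∈ [2, ∞), let m, ℓ ∈ ℕ with 1 ≤ ℓ ≤ m, let k_ℓ ∈ {0,…,ℓ}, and consider positive functions r_0,…,r_ℓ of ε ∈ (0,1) with r_0 = 1. Suppose f : {1,…,ℓ} → {1,2} has exactly k_ℓ indices with f(i) = 1. Then there is a choice of the r_i (namely r_i determined by requiring all terms below to be comparable, with r_1^{(δ_{2,f(1)} + 2δ_{1,f(1)})} ∼ ε^{2/(2p + 2ℓ − k_ℓ)}) and a constant C > 0 such that ε r_ℓ^{-1} + Σ_{i: f(i)=1} (r_i/r_{i−1})^{2p} + Σ_{i: f(i)=2} (r_i/r_{i−1})^{p} ≤ C ε^{2p/(2p + 2(ℓ − k_ℓ)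 + k_ℓ)} for all ε ∈ (0,1). -/
open BigOperators Finset

/-- Heuristic scaling of the upper bound: with `k_ℓ` the number of indices `i ∈ {1,…,ℓ}`
with `f(i) = 1`, there are positive length scales `r_i(ε)` with `r_0 = 1` and a constant
`C > 0` such that
`ε r_ℓ⁻¹ + Σ_{f(i)=1} (r_i/r_{i−1})^{2p} + Σ_{f(i)=2} (r_i/r_{i−1})^p
  ≤ C ε^{2p/(2p + 2(ℓ−k_ℓ) + k_ℓ)}` for all `ε ∈ (0,1)`. -/
theorem heuristic_upper_bound_scaling (p : ℝ) (hp : 2 ≤ p)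
    (m ℓ : ℕ) (hℓ1 : 1 ≤ ℓ) (hℓm : ℓ ≤ m)
    (f : ℕ → ℕ) (hf : ∀ i ∈ Finset.Icc 1 ℓ, f i = 1 ∨ f i = 2)
    (kℓ : ℕ) (hk : kℓ = ((Finset.Icc 1 ℓ).filter (fun i => f i = 1)).card) :
    ∃ r : ℕ → ℝ → ℝ, ∃ C : ℝ, 0 < C ∧
      (∀ ε ∈ Set.Ioo (0 : ℝ) 1, r 0 ε = 1 ∧ ∀ i ≤ ℓ, 0 < r i ε) ∧
      ∀ ε ∈ Set.Ioo (0 : ℝ) 1,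
        ε * (r ℓ ε)⁻¹
          + (∑ i ∈ (Finset.Icc 1 ℓ).filter (fun i => f i = 1),
              (r i ε / r (i - 1) ε) ^ (2 * p))
          + (∑ i ∈ (Finset.Icc 1 ℓ).filter (fun i => f i = 2),
              (r i ε / r (i - 1) ε) ^ p)
        ≤ C * ε ^ (2 * p / (2 * p + 2 * ((ℓ : ℝ) - (kℓ : ℝ)) + (kℓ : ℝ))) := by
  have hℓR : (1 : ℝ) ≤ (ℓ : ℝ) := by exact_mod_cast hℓ1
  have hkℓnat : kℓ ≤ ℓ := by
    rw [hk]
    calc ((Finset.Icc 1 ℓ).filter (fun i => f i = 1)).card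
        ≤ (Finset.Icc 1 ℓ).card := Finset.card_filter_le _ _
      _ = ℓ := by simp [Nat.card_Icc]
  have hkle : (kℓ : ℝ) ≤ (ℓ : ℝ) := by exact_mod_cast hkℓnat
  set D : ℝ := 2 * p + 2 * (ℓ : ℝ) - (kℓ : ℝ) with hD
  have hDpos : 0 < D := by simp only [hD]; nlinarith
  set α : ℝ := 2 / D with hα
  set E : ℕ → ℝ := fun i => α * ∑ j ∈ Finset.Icc 1 i, (if f j = 1 then (1:ℝ)/2 else 1)
    with hE
  refine ⟨fun i ε => ε ^ (E i), (ℓ : ℝ) + 1, by positivity, ?_, ?_⟩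
  · intro ε hε
    constructor
    · show ε ^ E 0 = 1
      have : E 0 = 0 := by simp [hE]
      rw [this, Real.rpow_zero]
    · intro i _; exact Real.rpow_pos_of_pos hε.1 _
  · intro ε hε
    obtain ⟨hε0, hε1⟩ := hε
    -- The ratio of consecutive scales
    have hstep : ∀ i ∈ Finset.Icc 1 ℓ,
        ε ^ E i / ε ^ E (i - 1) = ε ^ (α * (if f i = 1 then (1:ℝ)/2 else 1)) := by
      intro i hi
      obtain ⟨hi1, hi2⟩ := Finset.mem_Icc.mp hi
      obtain ⟨n, rfl⟩ : ∃ n, i = n + 1 := ⟨i - 1, (Nat.succ_pred_eq_of_pos hi1).symm⟩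
      have hsum : E (n + 1) = E n + α * (if f (n+1) = 1 then (1:ℝ)/2 else 1) := by
        simp only [hE]
        rw [Finset.sum_Icc_succ_top (Nat.succ_le_succ (Nat.zero_le n))]
        ring
      rw [← Real.rpow_sub hε0]
      congr 1
      simp only [Nat.add_sub_cancel, hsum]
      ring
    -- value of each term in the first sum
    have h1 : ∀ i ∈ (Finset.Icc 1 ℓ).filter (fun i => f i = 1),
        (ε ^ E i / ε ^ E (i - 1)) ^ (2 * p) = ε ^ (p * α) := by
      intro i hi
      obtain ⟨hi', hfi⟩ := Finset.mem_filter.mp hi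
      rw [hstep i hi', hfi, if_pos rfl, ← Real.rpow_mul hε0.le]
      congr 1; ring
    have h2 : ∀ i ∈ (Finset.Icc 1 ℓ).filter (fun i => f i = 2),
        (ε ^ E i / ε ^ E (i - 1)) ^ p = ε ^ (p * α) := by
      intro i hi
      obtain ⟨hi', hfi⟩ := Finset.mem_filter.mp hi
      have hne : f i ≠ 1 := by omega
      rw [hstep i hi', if_neg hne, ← Real.rpow_mul hε0.le]
      congr 1; ring
    -- cardinalities
    have hcard1 : ((Finset.Icc 1 ℓ).filter (fun i => f i = 1)).card = kℓ := hk.symm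
    have hcongr : (Finset.Icc 1 ℓ).filter (fun i => ¬ f i = 1)
        = (Finset.Icc 1 ℓ).filter (fun i => f i = 2) := by
      apply Finset.filter_congr
      intro i hi
      rcases hf i hi with h | h <;> simp [h]
    have hcard2 : ((Finset.Icc 1 ℓ).filter (fun i => f i = 2)).card = ℓ - kℓ := by
      have hsplit := Finset.card_filter_add_card_filter_not
        (s := Finset.Icc 1 ℓ) (p := fun i => f i = 1)
      rw [hcongr] at hsplit
      have hIcc : (Finset.Icc 1 ℓ).card = ℓ := by simp [Nat.card_Icc]
      omega
    -- E ℓ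
    have hEℓ : E ℓ = α * ((ℓ : ℝ) - (kℓ : ℝ) / 2) := by
      simp only [hE]
      congr 1
      rw [Finset.sum_ite, Finset.sum_const, Finset.sum_const, hcongr, hcard1, hcard2,
        nsmul_eq_mul, nsmul_eq_mul, Nat.cast_sub hkℓnat]
      push_cast
      ring
    have hDne : D ≠ 0 := ne_of_gt hDpos
    have hfirst : ε * (ε ^ E ℓ)⁻¹ = ε ^ (p * α) := by
      have h1E : ε ^ ((1 : ℝ) - E ℓ) = ε * (ε ^ E ℓ)⁻¹ := by
        rw [Real.rpow_sub hε0, Real.rpow_one, div_eq_mul_inv]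
      have hval : (1 : ℝ) - E ℓ = p * α := by
        rw [hEℓ, hα]
        field_simp
        rw [hD]
        ring
      rw [← h1E, hval]
    have hexp : 2 * p / (2 * p + 2 * ((ℓ : ℝ) - (kℓ : ℝ)) + (kℓ : ℝ)) = p * α := by
      have hDeq : 2 * p + 2 * ((ℓ : ℝ) - (kℓ : ℝ)) + (kℓ : ℝ) = D := by rw [hD]; ring
      rw [hDeq, hα]
      ring
    rw [Finset.sum_congr rfl h1, Finset.sum_congr rfl h2, Finset.sum_const,
      Finset.sum_const, hcard1, hcard2, hfirst, hexp]
    rw [nsmul_eq_mul, nsmul_eq_mul]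
    have hcast : ((ℓ - kℓ : ℕ) : ℝ) = (ℓ : ℝ) - (kℓ : ℝ) := Nat.cast_sub hkℓnat
    rw [hcast]
    have : ε ^ (p * α) + (kℓ : ℝ) * ε ^ (p * α) + ((ℓ : ℝ) - (kℓ : ℝ)) * ε ^ (p * α)
        = ((ℓ : ℝ) + 1) * ε ^ (p * α) := by ring
    rw [this]
end

section
/- Let ξ ∈ ℝ^d \ {0} and let χ̂ ∈ ℂ^{d×d} be diagonal. Then |ξ|^{-4}|Σ_i χ̂_{ii} ξ_i²|² + Σ_i |χ̂_{ii}|² − 2|ξ|^{-2} Σ_i |χ̂_{ii}|² ξ_i² = |ξ|^{-4}( Σ_{i<j} |ξ_i² χ̂_{jj} + ξ_j² χ̂_{ii}|² + Σ_i Σ_{j≠i} Σ_{k≠i,j} ξ_k² ξ_j² |χ̂_{ii}|² ). -/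
open BigOperators Finset

lemma swap_lt {d : ℕ} (g : Fin d → Fin d → ℝ) :
    ∑ i, ∑ j ∈ univ.filter (fun j => i < j), g i j
      = ∑ i, ∑ j ∈ univ.filter (fun j => j < i), g j i := by
  rw [Finset.sum_comm' (t' := (univ : Finset (Fin d)))
    (s' := fun y => univ.filter (fun x => x < y)) (fun x y => by simp)]

lemma lt_gt_erase {d : ℕ} (g : Fin d → Fin d → ℝ) :
    ∑ i, ∑ j ∈ univ.filter (fun j => i < j), g i j
      + ∑ i, ∑ j ∈ univ.filter (fun j => j < i), g i j
      = ∑ i, ∑ j ∈ univ.erase i, g i j := by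
  rw [← Finset.sum_add_distrib]
  refine Finset.sum_congr rfl fun i _ => ?_
  rw [← Finset.sum_union]
  · congr 1; ext j; simp [lt_or_lt_iff_ne, eq_comm, ne_comm]
  · simp only [Finset.disjoint_filter]
    intro x _ h h'; exact absurd h' (not_lt.2 h.le)

lemma sum_key {d : ℕ} (a n : Fin d → ℝ) (r : Fin d → Fin d → ℝ)
    (hsym : ∀ i j, r i j = r j i) (hdiag : ∀ i, r i i = n i) :
    (∑ i, ∑ j, a i * a j * r i j) + (∑ i, a i)^2 * (∑ i, n i)
      - 2*(∑ i, a i)*(∑ i, n i * a i)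
    = (∑ i, ∑ j ∈ univ.filter (fun j => i < j),
        (a i^2 * n j + a j^2 * n i + 2*(a i * a j)*r i j))
      + ∑ i, ∑ j ∈ univ.erase i, ∑ k ∈ (univ.erase i).erase j, a k * a j * n i := by
  set q : ℝ := ∑ i, a i with hqdef
  set S : Fin d → ℝ := fun i => ∑ j ∈ univ.erase i, a j with hSdef
  have hS : ∀ i, S i = q - a i := by
    intro i
    have := Finset.add_sum_erase univ a (mem_univ i)
    simp only [hSdef, hqdef]
    linarith
  set M : ℝ := ∑ i, ∑ j ∈ univ.erase i, a i * a j * r i j with hMdef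
  set P : ℝ := ∑ i, ∑ j ∈ univ.erase i, a j^2 * n i with hPdef
  -- left double sum
  have hL : (∑ i, ∑ j, a i * a j * r i j) = (∑ i, a i^2 * n i) + M := by
    rw [hMdef, ← Finset.sum_add_distrib]
    refine Finset.sum_congr rfl fun i _ => ?_
    rw [← Finset.add_sum_erase univ (fun j => a i * a j * r i j) (mem_univ i), hdiag]
    ring_nf
  -- pair sum
  have hpairsplit : (∑ i, ∑ j ∈ univ.filter (fun j => i < j),
        (a i^2 * n j + a j^2 * n i + 2*(a i * a j)*r i j))
      = (∑ i, ∑ j ∈ univ.filter (fun j => i < j), a i^2 * n j)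
        + (∑ i, ∑ j ∈ univ.filter (fun j => i < j), a j^2 * n i)
        + ((∑ i, ∑ j ∈ univ.filter (fun j => i < j), a i * a j * r i j)
          + (∑ i, ∑ j ∈ univ.filter (fun j => i < j), a i * a j * r i j)) := by
    simp only [← Finset.sum_add_distrib]
    refine Finset.sum_congr rfl fun i _ => Finset.sum_congr rfl fun j _ => by ring
  have s1 : (∑ i, ∑ j ∈ univ.filter (fun j => i < j), a i^2 * n j)
      = ∑ i, ∑ j ∈ univ.filter (fun j => j < i), a j^2 * n i :=
    swap_lt (fun i j => a i^2 * n j)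
  have s2 : (∑ i, ∑ j ∈ univ.filter (fun j => i < j), a i * a j * r i j)
      = ∑ i, ∑ j ∈ univ.filter (fun j => j < i), a i * a j * r i j := by
    rw [swap_lt (fun i j => a i * a j * r i j)]
    exact Finset.sum_congr rfl fun i _ => Finset.sum_congr rfl fun j _ => by
      rw [hsym]; ring
  have hP' : (∑ i, ∑ j ∈ univ.filter (fun j => i < j), a j^2 * n i)
      + (∑ i, ∑ j ∈ univ.filter (fun j => j < i), a j^2 * n i) = P :=
    lt_gt_erase (fun i j => a j^2 * n i)
  have hM' : (∑ i, ∑ j ∈ univ.filter (fun j => i < j), a i * a j * r i j)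
      + (∑ i, ∑ j ∈ univ.filter (fun j => j < i), a i * a j * r i j) = M :=
    lt_gt_erase (fun i j => a i * a j * r i j)
  -- triple sum
  have htriple : (∑ i, ∑ j ∈ univ.erase i, ∑ k ∈ (univ.erase i).erase j,
        a k * a j * n i) = (∑ i, n i * (S i)^2) - P := by
    have inner : ∀ i, ∀ j ∈ univ.erase i,
        (∑ k ∈ (univ.erase i).erase j, a k * a j * n i)
          = (S i - a j) * (a j * n i) := by
      intro i j hj
      have h1 : a j + ∑ k ∈ (univ.erase i).erase j, a k = S i :=
        Finset.add_sum_erase (univ.erase i) a hj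
      calc (∑ k ∈ (univ.erase i).erase j, a k * a j * n i)
          = (∑ k ∈ (univ.erase i).erase j, a k) * (a j * n i) := by
            rw [Finset.sum_mul]
            exact Finset.sum_congr rfl fun k _ => by ring
        _ = (S i - a j) * (a j * n i) := by
            have h2 : (∑ k ∈ (univ.erase i).erase j, a k) = S i - a j := by linarith
            rw [h2]
    have main : (∑ i, ∑ j ∈ univ.erase i, ∑ k ∈ (univ.erase i).erase j, a k * a j * n i)
        = ∑ i, (n i * (S i)^2 - ∑ j ∈ univ.erase i, a j^2 * n i) := by
      refine Finset.sum_congr rfl fun i _ => ?_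
      rw [Finset.sum_congr rfl (inner i)]
      have e : ∀ x ∈ univ.erase i, (S i - a x) * (a x * n i)
          = (S i * n i) * a x - a x^2 * n i := fun x _ => by ring
      rw [Finset.sum_congr rfl e, Finset.sum_sub_distrib, ← Finset.mul_sum]
      have hSi : (∑ x ∈ univ.erase i, a x) = S i := rfl
      rw [hSi]; ring
    rw [main, Finset.sum_sub_distrib, hPdef]
  -- final per-index identity
  have hfin : (∑ i, a i^2 * n i) + q^2 * (∑ i, n i) - 2*q*(∑ i, n i * a i)
      = ∑ i, n i * (S i)^2 := by
    have e : ∀ i ∈ (univ : Finset (Fin d)), n i * (S i)^2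
        = n i * q^2 - (2*q) * (n i * a i) + a i^2 * n i := fun i _ => by
      rw [hS]; ring
    rw [Finset.sum_congr rfl e, Finset.sum_add_distrib, Finset.sum_sub_distrib,
      ← Finset.mul_sum, ← Finset.sum_mul]
    ring
  linarith [hL, hpairsplit, s1, s2, hP', hM', htriple, hfin]

lemma abs_sq_sum {d : ℕ} (ξ : Fin d → ℝ) (χ : Fin d → ℂ) :
    ‖∑ i, χ i * (ξ i : ℂ) ^ 2‖ ^ 2
      = ∑ i, ∑ j, (ξ i ^ 2) * (ξ j ^ 2) * (χ i * (starRingEnd ℂ) (χ j)).re := by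
  rw [Complex.sq_norm, Complex.normSq_apply, Complex.re_sum, Complex.im_sum]
  have hre : ∀ i, (χ i * (ξ i : ℂ) ^ 2).re = (χ i).re * ξ i ^ 2 := by
    intro i; simp [Complex.mul_re, ← Complex.ofReal_pow]
  have him : ∀ i, (χ i * (ξ i : ℂ) ^ 2).im = (χ i).im * ξ i ^ 2 := by
    intro i; simp [Complex.mul_im, ← Complex.ofReal_pow]
  simp only [hre, him]
  rw [Finset.sum_mul_sum, Finset.sum_mul_sum, ← Finset.sum_add_distrib]
  refine Finset.sum_congr rfl fun i _ => ?_
  rw [← Finset.sum_add_distrib]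
  refine Finset.sum_congr rfl fun j _ => ?_
  simp [Complex.mul_re]
  ring

lemma abs_sq_pair {d : ℕ} (ξ : Fin d → ℝ) (χ : Fin d → ℂ) (i j : Fin d) :
    ‖(ξ i : ℂ) ^ 2 * χ j + (ξ j : ℂ) ^ 2 * χ i‖ ^ 2
      = (ξ i ^ 2)^2 * ‖χ j‖ ^ 2 + (ξ j ^ 2)^2 * ‖χ i‖ ^ 2
        + 2 * (ξ i ^ 2 * ξ j ^ 2) * (χ i * (starRingEnd ℂ) (χ j)).re := by
  simp only [Complex.sq_norm, Complex.normSq_apply, Complex.add_re, Complex.add_im,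
    Complex.mul_re, Complex.mul_im, ← Complex.ofReal_pow, Complex.ofReal_re,
    Complex.ofReal_im, Complex.conj_re, Complex.conj_im]
  ring

/-- The key algebraic identity reformulating the pointwise minimal elastic energy in
Fourier space: for `ξ ∈ ℝ^d \ {0}` and a diagonal complex matrix with entries `χ_i`,
`|ξ|⁻⁴|Σ_i χ_i ξ_i²|² + Σ_i |χ_i|² − 2|ξ|⁻² Σ_i |χ_i|² ξ_i²
  = |ξ|⁻⁴(Σ_{i<j} |ξ_i² χ_j + ξ_j² χ_i|² + Σ_i Σ_{j≠i} Σ_{k≠i,j} ξ_k² ξ_j² |χ_i|²)`. -/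
theorem fourier_energy_identity {d : ℕ} (ξ : Fin d → ℝ) (hξ : ξ ≠ 0)
    (χ : Fin d → ℂ) :
    let q : ℝ := ∑ i, ξ i ^ 2
    (q ^ 2)⁻¹ * ‖∑ i, χ i * (ξ i : ℂ) ^ 2‖ ^ 2
        + (∑ i, ‖χ i‖ ^ 2)
        - 2 * q⁻¹ * ∑ i, ‖χ i‖ ^ 2 * ξ i ^ 2
      = (q ^ 2)⁻¹ *
        ((∑ i, ∑ j ∈ Finset.univ.filter (fun j => i < j),
            ‖(ξ i : ℂ) ^ 2 * χ j + (ξ j : ℂ) ^ 2 * χ i‖ ^ 2)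
          + ∑ i, ∑ j ∈ Finset.univ.erase i, ∑ k ∈ (Finset.univ.erase i).erase j,
              ξ k ^ 2 * ξ j ^ 2 * ‖χ i‖ ^ 2) := by
  intro q
  obtain ⟨i₀, hi₀⟩ := Function.ne_iff.mp hξ
  have hi₀' : ξ i₀ ≠ 0 := hi₀
  have hq : 0 < q :=
    Finset.sum_pos' (fun j _ => sq_nonneg _)
      ⟨i₀, mem_univ i₀, lt_of_le_of_ne (sq_nonneg _) (Ne.symm (pow_ne_zero 2 hi₀'))⟩
  have hqne : q ≠ 0 := ne_of_gt hq
  have hsym : ∀ i j, (χ i * (starRingEnd ℂ) (χ j)).re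
      = (χ j * (starRingEnd ℂ) (χ i)).re := by
    intro i j
    simp only [Complex.mul_re, Complex.conj_re, Complex.conj_im]
    ring
  have hdiag : ∀ i, (χ i * (starRingEnd ℂ) (χ i)).re = ‖χ i‖ ^ 2 := by
    intro i
    simp only [Complex.mul_re, Complex.conj_re, Complex.conj_im, Complex.sq_norm,
      Complex.normSq_apply]
    ring
  have key := sum_key (fun i => ξ i ^ 2) (fun i => ‖χ i‖ ^ 2)
    (fun i j => (χ i * (starRingEnd ℂ) (χ j)).re) hsym hdiag
  have hp : (∑ i, ∑ j ∈ Finset.univ.filter (fun j => i < j),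
        ‖(ξ i : ℂ) ^ 2 * χ j + (ξ j : ℂ) ^ 2 * χ i‖ ^ 2)
      = ∑ i, ∑ j ∈ Finset.univ.filter (fun j => i < j),
          ((ξ i ^ 2)^2 * ‖χ j‖ ^ 2 + (ξ j ^ 2)^2 * ‖χ i‖ ^ 2
            + 2 * (ξ i ^ 2 * ξ j ^ 2) * (χ i * (starRingEnd ℂ) (χ j)).re) :=
    Finset.sum_congr rfl fun i _ => Finset.sum_congr rfl fun j _ => abs_sq_pair ξ χ i j
  rw [hp, abs_sq_sum ξ χ]
  have hqd : (∑ i, ξ i ^ 2) = q := rfl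
  rw [hqd] at key
  have gen : ∀ A B C D : ℝ, A + q^2*B - 2*q*C = D →
      (q^2)⁻¹*A + B - 2*q⁻¹*C = (q^2)⁻¹*D := by
    intro A B C D h
    subst h
    field_simp
  exact gen _ _ _ _ key
end
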